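/- Let $A_1 \in \mathbb{R}^{k \times d_1}$, $A_2 \in \mathbb{R}^{k \times d_2}$, $S_1 \in \mathbb{R}^{d_1 \times D}$, and $S_2 \in \mathbb{R}^{d_2 \times D}$ satisfy $A_1 S_1 = A_2 S_2$ and $\operatorname{im} A_i^\top \subseteq \operatorname{im} S_i$ for both $i \in \{1,2\}$. Then $\ker A_i S_i = \ker S_1 + \ker S_2$ (for either, equivalently both, $i \in \{1,2\}$) if and only if $\ker [A_1, -A_2] = \operatorname{im} [S_1; S_2] + (\ker S_1^\top \oplus \ker S_2^\top)$. -/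

import Mathlib

open Matrix

/-- If `Sᵀ (S x) = 0` then `S x = 0`. -/
lemma aux_mulVec_eq_zero {n m : ℕ} (S : Matrix (Fin n) (Fin m) ℝ) (x : Fin m → ℝ)
    (h : Sᵀ *ᵥ (S *ᵥ x) = 0) : S *ᵥ x = 0 := by
  have hd : (S *ᵥ x) ⬝ᵥ (S *ᵥ x) = 0 := by
    rw [dotProduct_mulVec, ← mulVec_transpose, h, zero_dotProduct]
  exact dotProduct_self_eq_zero.mp hd

/-- If `im Aᵀ ⊆ im S` and `Sᵀ u = 0` then `A u = 0`. -/
lemma aux_ker_of_range_le {k n m : ℕ} (A : Matrix (Fin k) (Fin n) ℝ)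
    (S : Matrix (Fin n) (Fin m) ℝ)
    (h : LinearMap.range (Aᵀ.mulVecLin) ≤ LinearMap.range (S.mulVecLin))
    (u : Fin n → ℝ) (hu : Sᵀ *ᵥ u = 0) : A *ᵥ u = 0 := by
  funext i
  obtain ⟨x, hx⟩ := h ⟨Pi.single i 1, rfl⟩
  simp only [mulVecLin_apply] at hx
  have h1 : (S *ᵥ x) ⬝ᵥ u = 0 := by
    rw [dotProduct_comm, dotProduct_mulVec, ← mulVec_transpose, hu, zero_dotProduct]
  rw [hx, mulVec_transpose, single_one_vecMul] at h1
  simpa [mulVec, dotProduct] using h1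

/-- Every vector decomposes as `S x + u₀` with `Sᵀ u₀ = 0`. -/
lemma aux_decomp {n m : ℕ} (S : Matrix (Fin n) (Fin m) ℝ) (u : Fin n → ℝ) :
    ∃ x, Sᵀ *ᵥ (u - S *ᵥ x) = 0 := by
  have hle : LinearMap.range (Sᵀ * S).mulVecLin ≤ LinearMap.range Sᵀ.mulVecLin := by
    rintro _ ⟨x, rfl⟩
    exact ⟨S *ᵥ x, by simp [mulVecLin_apply, mulVec_mulVec]⟩
  have hrank : LinearMap.range (Sᵀ * S).mulVecLin = LinearMap.range Sᵀ.mulVecLin := by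
    apply Submodule.eq_of_le_of_finrank_eq hle
    have := S.rank_transpose_mul_self
    have := S.rank_transpose
    simp only [Matrix.rank] at *
    omega
  obtain ⟨x, hx⟩ := hrank.ge ⟨u, rfl⟩
  refine ⟨x, ?_⟩
  simp only [mulVecLin_apply, ← mulVec_mulVec] at hx
  rw [mulVec_sub, hx, sub_self]

/-- Suppose `A₁S₁ = A₂S₂` and `im Aᵢᵀ ⊆ im Sᵢ` for both `i`. Then
`ker AᵢSᵢ = ker S₁ + ker S₂` if and only if
`ker [A₁, -A₂] = im [S₁; S₂] + (ker S₁ᵀ ⊕ ker S₂ᵀ)`.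
The subspace `ker S₁ᵀ ⊕ ker S₂ᵀ` of `ℝ^{d₁+d₂}` is realized by transporting the product
of the kernels along the linear equivalence `(Fin d₁ ⊕ Fin d₂ → ℝ) ≃ₗ (Fin d₁ → ℝ) × (Fin d₂ → ℝ)`. -/
theorem ker_eq_sum_iff_ker_concat (k d₁ d₂ D : ℕ)
    (A₁ : Matrix (Fin k) (Fin d₁) ℝ) (A₂ : Matrix (Fin k) (Fin d₂) ℝ)
    (S₁ : Matrix (Fin d₁) (Fin D) ℝ) (S₂ : Matrix (Fin d₂) (Fin D) ℝ)
    (hAS : A₁ * S₁ = A₂ * S₂)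
    (h₁ : LinearMap.range (A₁ᵀ.mulVecLin) ≤ LinearMap.range (S₁.mulVecLin))
    (h₂ : LinearMap.range (A₂ᵀ.mulVecLin) ≤ LinearMap.range (S₂.mulVecLin)) :
    (LinearMap.ker (A₁ * S₁).mulVecLin
        = LinearMap.ker S₁.mulVecLin ⊔ LinearMap.ker S₂.mulVecLin)
      ↔ LinearMap.ker (fromCols A₁ (-A₂)).mulVecLin
          = LinearMap.range (fromRows S₁ S₂).mulVecLin ⊔
              Submodule.map
                ((LinearEquiv.sumArrowLequivProdArrow (Fin d₁) (Fin d₂) ℝ ℝ).symm :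
                  ((Fin d₁ → ℝ) × (Fin d₂ → ℝ)) →ₗ[ℝ] (Fin d₁ ⊕ Fin d₂ → ℝ))
                ((LinearMap.ker S₁ᵀ.mulVecLin).prod (LinearMap.ker S₂ᵀ.mulVecLin)) := by
  set e := ((LinearEquiv.sumArrowLequivProdArrow (Fin d₁) (Fin d₂) ℝ ℝ).symm :
      ((Fin d₁ → ℝ) × (Fin d₂ → ℝ)) →ₗ[ℝ] (Fin d₁ ⊕ Fin d₂ → ℝ)) with he_def
  have he : ∀ (u : Fin d₁ → ℝ) (v : Fin d₂ → ℝ), e (u, v) = Sum.elim u v := by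
    intro u v
    funext i
    cases i with
    | inl a => simp [he_def, LinearEquiv.sumArrowLequivProdArrow_symm_apply_inl]
    | inr b => simp [he_def, LinearEquiv.sumArrowLequivProdArrow_symm_apply_inr]
  -- the easy inclusion for the concatenated statement
  have hsub : LinearMap.range (fromRows S₁ S₂).mulVecLin ⊔
      Submodule.map e ((LinearMap.ker S₁ᵀ.mulVecLin).prod (LinearMap.ker S₂ᵀ.mulVecLin))
        ≤ LinearMap.ker (fromCols A₁ (-A₂)).mulVecLin := by
    apply sup_le
    · rintro _ ⟨x, rfl⟩
      rw [LinearMap.mem_ker, mulVecLin_apply, mulVecLin_apply, fromRows_mulVec,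
        fromCols_mulVec_sumElim, neg_mulVec, mulVec_mulVec, mulVec_mulVec, hAS,
        add_neg_cancel]
    · rintro _ ⟨⟨a, b⟩, hab, rfl⟩
      have ha : S₁ᵀ *ᵥ a = 0 := hab.1
      have hb : S₂ᵀ *ᵥ b = 0 := hab.2
      rw [LinearMap.mem_ker, mulVecLin_apply, he, fromCols_mulVec_sumElim,
        aux_ker_of_range_le A₁ S₁ h₁ a ha, neg_mulVec,
        aux_ker_of_range_le A₂ S₂ h₂ b hb, neg_zero, add_zero]
  -- the easy inclusion for the kernel statement
  have hsub2 : LinearMap.ker S₁.mulVecLin ⊔ LinearMap.ker S₂.mulVecLin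
      ≤ LinearMap.ker (A₁ * S₁).mulVecLin := by
    apply sup_le
    · intro x hx
      rw [LinearMap.mem_ker, mulVecLin_apply] at hx ⊢
      rw [← mulVec_mulVec, hx, mulVec_zero]
    · intro x hx
      rw [LinearMap.mem_ker, mulVecLin_apply] at hx ⊢
      rw [hAS, ← mulVec_mulVec, hx, mulVec_zero]
  constructor
  · intro hker
    refine le_antisymm ?_ hsub
    intro w hw
    rw [LinearMap.mem_ker, mulVecLin_apply] at hw
    set u : Fin d₁ → ℝ := w ∘ Sum.inl with hu_def
    set v : Fin d₂ → ℝ := w ∘ Sum.inr with hv_def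
    have hwelim : w = Sum.elim u v := (Sum.elim_comp_inl_inr w).symm
    rw [hwelim, fromCols_mulVec_sumElim, neg_mulVec, ← sub_eq_add_neg,
      sub_eq_zero] at hw
    obtain ⟨x, hx⟩ := aux_decomp S₁ u
    obtain ⟨y, hy⟩ := aux_decomp S₂ v
    have hx' : A₁ *ᵥ (u - S₁ *ᵥ x) = 0 := aux_ker_of_range_le A₁ S₁ h₁ _ hx
    have hy' : A₂ *ᵥ (v - S₂ *ᵥ y) = 0 := aux_ker_of_range_le A₂ S₂ h₂ _ hy
    rw [mulVec_sub, sub_eq_zero] at hx' hy'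
    have hxy : x - y ∈ LinearMap.ker (A₁ * S₁).mulVecLin := by
      have e1 : (A₁ * S₁) *ᵥ x = A₁ *ᵥ u := by rw [← mulVec_mulVec, ← hx']
      have e2 : (A₁ * S₁) *ᵥ y = A₁ *ᵥ u := by
        rw [hAS, ← mulVec_mulVec, ← hy', ← hw]
      rw [LinearMap.mem_ker, mulVecLin_apply, mulVec_sub, e1, e2, sub_self]
    rw [hker] at hxy
    obtain ⟨p, hp, q, hq, hpq⟩ := Submodule.mem_sup.mp hxy
    rw [LinearMap.mem_ker, mulVecLin_apply] at hp hq
    have hz1 : S₁ *ᵥ (x - p) = S₁ *ᵥ x := by rw [mulVec_sub, hp, sub_zero]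
    have hzq : x - p = y + q := by linear_combination -hpq
    have hz2 : S₂ *ᵥ (x - p) = S₂ *ᵥ y := by rw [hzq, mulVec_add, hq, add_zero]
    refine Submodule.mem_sup.mpr
      ⟨(fromRows S₁ S₂).mulVecLin (x - p), ⟨x - p, rfl⟩,
       e (u - S₁ *ᵥ x, v - S₂ *ᵥ y),
       ⟨(u - S₁ *ᵥ x, v - S₂ *ᵥ y), ⟨hx, hy⟩, rfl⟩, ?_⟩
    rw [mulVecLin_apply, fromRows_mulVec, he, hz1, hz2, hwelim]
    funext i
    cases i with
    | inl a => simp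
    | inr b => simp
  · intro hcc
    refine le_antisymm ?_ hsub2
    intro x hx
    rw [LinearMap.mem_ker, mulVecLin_apply] at hx
    have hw : Sum.elim (S₁ *ᵥ x) (0 : Fin d₂ → ℝ)
        ∈ LinearMap.ker (fromCols A₁ (-A₂)).mulVecLin := by
      rw [LinearMap.mem_ker, mulVecLin_apply, fromCols_mulVec_sumElim, mulVec_zero,
        add_zero, mulVec_mulVec, hx]
    rw [hcc] at hw
    obtain ⟨_, ⟨z, rfl⟩, _, ⟨⟨a, b⟩, hab, rfl⟩, hsum⟩ := Submodule.mem_sup.mp hw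
    have ha : S₁ᵀ *ᵥ a = 0 := hab.1
    have hb : S₂ᵀ *ᵥ b = 0 := hab.2
    rw [mulVecLin_apply, fromRows_mulVec, he] at hsum
    have hA' : S₁ *ᵥ z + a = S₁ *ᵥ x := by
      funext i
      simpa using congrFun hsum (Sum.inl i)
    have hB' : S₂ *ᵥ z + b = 0 := by
      funext j
      simpa using congrFun hsum (Sum.inr j)
    have hz2 : S₂ *ᵥ z = 0 := by
      apply aux_mulVec_eq_zero
      have : S₂ *ᵥ z = -b := by linear_combination hB'
      rw [this, mulVec_neg, hb, neg_zero]
    have hz1 : S₁ *ᵥ (x - z) = 0 := by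
      apply aux_mulVec_eq_zero
      have : S₁ *ᵥ (x - z) = a := by rw [mulVec_sub]; linear_combination -hA'
      rw [this, ha]
    refine Submodule.mem_sup.mpr ⟨x - z, ?_, z, ?_, by abel⟩
    · rwa [LinearMap.mem_ker, mulVecLin_apply]
    · rwa [LinearMap.mem_ker, mulVecLin_apply]
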